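/- Menger's theorem: let Ω be a set and σ: Ω × Ω → ℝ a world function (σ(P,P) = 0 for all P, and σ symmetric). The σ-space (Ω, σ) is isometrically embeddable in the n-dimensional proper Euclidean space — i.e., there exists f: Ω → EuclideanSpace ℝ (Fin n) with ½‖f(P) − f(Q)‖² = σ(P,Q) for all P, Q — if and only if every finite subset S ⊆ Ω with at most n+3 points is isometrically embeddable, i.e., admits f_S: S → EuclideanSpace ℝ (Fin n) with ½‖f_S(P) − f_S(Q)‖² = σ(P,Q) for all P, Q ∈ S. -/

import Mathlib

open Finset Submodule Set

local notation "⟬" x ", " y "⟭" => @inner ℝ _ _ x y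

private lemma menger_inner_sum_sum {E : Type*} [NormedAddCommGroup E] [InnerProductSpace ℝ E]
    {k : ℕ} (v : Fin k → E) (c d : Fin k → ℝ) :
    ⟬∑ i, c i • v i, ∑ j, d j • v j⟭ = ∑ i, ∑ j, c i * d j * ⟬v i, v j⟭ := by
  rw [sum_inner]
  refine Finset.sum_congr rfl fun i _ => ?_
  rw [real_inner_smul_left, inner_sum, Finset.mul_sum]
  refine Finset.sum_congr rfl fun j _ => ?_
  rw [real_inner_smul_right]; ring

private lemma menger_norm_sq_sum_eq {E : Type*} [NormedAddCommGroup E] [InnerProductSpace ℝ E]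
    {k : ℕ} {v w : Fin k → E} (h : ∀ i j, ⟬v i, v j⟭ = ⟬w i, w j⟭) (c : Fin k → ℝ) :
    ‖∑ i, c i • v i‖ ^ 2 = ‖∑ i, c i • w i‖ ^ 2 := by
  rw [← real_inner_self_eq_norm_sq, ← real_inner_self_eq_norm_sq,
    menger_inner_sum_sum, menger_inner_sum_sum]
  exact Finset.sum_congr rfl fun i _ => Finset.sum_congr rfl fun j _ => by rw [h]

private lemma menger_li_transfer {E : Type*} [NormedAddCommGroup E] [InnerProductSpace ℝ E]
    {k : ℕ} {v w : Fin k → E} (h : ∀ i j, ⟬v i, v j⟭ = ⟬w i, w j⟭)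
    (hv : LinearIndependent ℝ v) : LinearIndependent ℝ w := by
  rw [Fintype.linearIndependent_iff] at hv ⊢
  intro c hc
  apply hv c
  have h0 := menger_norm_sq_sum_eq h c
  rw [hc, norm_zero] at h0
  have : ‖∑ i, c i • v i‖ = 0 := by
    have := sq_eq_zero_iff.mp (by rw [h0]; ring)
    exact this
  exact norm_eq_zero.mp this

private lemma menger_span_unique {E : Type*} [NormedAddCommGroup E] [InnerProductSpace ℝ E]
    {k : ℕ} (v : Fin k → E) {a c : E}
    (ha : a ∈ Submodule.span ℝ (Set.range v)) (hc : c ∈ Submodule.span ℝ (Set.range v))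
    (h : ∀ j, ⟬a, v j⟭ = ⟬c, v j⟭) : a = c := by
  obtain ⟨e, he⟩ := (mem_span_range_iff_exists_fun ℝ).mp (sub_mem ha hc)
  have h0 : ⟬a - c, a - c⟭ = 0 := by
    nth_rewrite 2 [← he]
    rw [inner_sum]
    refine Finset.sum_eq_zero fun j _ => ?_
    rw [real_inner_smul_right, inner_sub_left, h j, sub_self, mul_zero]
  exact sub_eq_zero.mp (inner_self_eq_zero.mp h0)

/-- Menger's theorem: the σ-space (Ω, σ) is isometrically embeddable in the
n-dimensional proper Euclidean space if and only if every set of at most n + 3 points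
of Ω is isometrically embeddable in it. -/
theorem menger_embedding_theorem (n : ℕ) (Ω : Type*) (σ : Ω → Ω → ℝ)
    (hzero : ∀ P : Ω, σ P P = 0) (hsymm : ∀ P Q : Ω, σ P Q = σ Q P) :
    (∃ f : Ω → EuclideanSpace ℝ (Fin n),
        ∀ P Q : Ω, ‖f P - f Q‖ ^ 2 / 2 = σ P Q) ↔
      ∀ S : Finset Ω, S.card ≤ n + 3 →
        ∃ f : S → EuclideanSpace ℝ (Fin n),
          ∀ P Q : S, ‖f P - f Q‖ ^ 2 / 2 = σ P Q := by
  classical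
  constructor
  · rintro ⟨f, hf⟩ S hS
    exact ⟨fun P => f P, fun P Q => hf P Q⟩
  · intro H
    cases isEmpty_or_nonempty Ω with
    | inl hempty => exact ⟨fun P => isEmptyElim P, fun P => isEmptyElim P⟩
    | inr hne =>
    obtain ⟨P₀⟩ := hne
    -- reformulated hypothesis for arbitrary finite index types
    have h' : ∀ (ι : Type) (_ : Fintype ι) (p : ι → Ω), Fintype.card ι ≤ n + 3 →
        ∃ x : ι → EuclideanSpace ℝ (Fin n),
          ∀ i j, ‖x i - x j‖ ^ 2 = 2 * σ (p i) (p j) := by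
      intro ι _ p hcard
      have hS : (Finset.univ.image p).card ≤ n + 3 :=
        le_trans (Finset.card_image_le.trans (by simp)) hcard
      obtain ⟨f, hf⟩ := H _ hS
      refine ⟨fun i => f ⟨p i, Finset.mem_image_of_mem p (Finset.mem_univ i)⟩, fun i j => ?_⟩
      have := hf ⟨p i, Finset.mem_image_of_mem p (Finset.mem_univ i)⟩
        ⟨p j, Finset.mem_image_of_mem p (Finset.mem_univ j)⟩
      simpa using by linarith
    -- the maximal configuration
    set Good : ℕ → Prop := fun k => ∃ (P : Fin k → Ω) (v : Fin k → EuclideanSpace ℝ (Fin n)),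
      LinearIndependent ℝ v ∧ (∀ i, ‖v i‖ ^ 2 = 2 * σ (P i) P₀) ∧
      (∀ i j, ‖v i - v j‖ ^ 2 = 2 * σ (P i) (P j)) with hGood
    have good0 : Good 0 :=
      ⟨Fin.elim0, Fin.elim0, linearIndependent_empty_type, fun i => i.elim0, fun i => i.elim0⟩
    have bound : ∀ k, Good k → k ≤ n := by
      rintro k ⟨P, v, hli, -, -⟩
      have := hli.fintype_card_le_finrank
      simpa [finrank_euclideanSpace_fin] using this
    set k := Nat.findGreatest Good n with hkdef
    have hk : Good k := Nat.findGreatest_spec (Nat.zero_le n) good0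
    have hmax : ¬ Good (k + 1) := by
      intro hg
      exact absurd hg (Nat.findGreatest_is_greatest (Nat.lt_succ_self _) (bound _ hg))
    obtain ⟨P, v, hli, hv0, hvv⟩ := hk
    have hkn : k ≤ n := bound _ ⟨P, v, hli, hv0, hvv⟩
    set b : Ω → Fin k → ℝ := fun R j => σ (P j) P₀ + σ R P₀ - σ (P j) R with hb
    have hGv : ∀ i j, ⟬v i, v j⟭ = σ (P i) P₀ + σ (P j) P₀ - σ (P i) (P j) := by
      intro i j
      have h4 := norm_sub_sq_real (v i) (v j)
      have h1 := hv0 i; have h2 := hv0 j; have h3 := hvv i j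
      linarith
    -- key construction
    have key : ∀ R S : Ω, ∃ a c : EuclideanSpace ℝ (Fin n),
        a ∈ Submodule.span ℝ (Set.range v) ∧ (∀ j, ⟬a, v j⟭ = b R j) ∧
        c ∈ Submodule.span ℝ (Set.range v) ∧ (∀ j, ⟬c, v j⟭ = b S j) ∧
        ‖a - c‖ ^ 2 = 2 * σ R S := by
      intro R S
      set p : Fin k ⊕ Fin 3 → Ω := Sum.elim P ![P₀, R, S] with hp
      obtain ⟨x, hx⟩ := h' (Fin k ⊕ Fin 3) inferInstance p (by simp; omega)
      set y : Fin k ⊕ Fin 3 → EuclideanSpace ℝ (Fin n) :=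
        fun a => x a - x (Sum.inr 0) with hy
      have hysub : ∀ a c, y a - y c = x a - x c := by
        intro a c; simp [hy, sub_sub_sub_cancel_right]
      have hnorm : ∀ a c, ‖y a - y c‖ ^ 2 = 2 * σ (p a) (p c) := by
        intro a c; rw [hysub]; exact hx a c
      have hysq : ∀ a, ‖y a‖ ^ 2 = 2 * σ (p a) P₀ := by
        intro a
        have := hx a (Sum.inr 0)
        simpa [hy, hp] using this
      have hyin : ∀ a c, ⟬y a, y c⟭ = σ (p a) P₀ + σ (p c) P₀ - σ (p a) (p c) := by
        intro a c
        have h4 := norm_sub_sq_real (y a) (y c)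
        have h1 := hysq a; have h2 := hysq c; have h3 := hnorm a c
        linarith
      set w : Fin k → EuclideanSpace ℝ (Fin n) := fun i => y (Sum.inl i) with hw
      set u : EuclideanSpace ℝ (Fin n) := y (Sum.inr 1) with hu
      set z : EuclideanSpace ℝ (Fin n) := y (Sum.inr 2) with hz
      have hGw : ∀ i j, ⟬v i, v j⟭ = ⟬w i, w j⟭ := by
        intro i j
        rw [hGv]
        have := hyin (Sum.inl i) (Sum.inl j)
        simpa [hp] using this.symm
      have hwli : LinearIndependent ℝ w := menger_li_transfer hGw hli
      -- both u and z lie in the span of w, by maximality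
      have hspan : ∀ (t : Fin 3), p (Sum.inr t) = P₀ ∨ True := fun t => Or.inr trivial
      have hinspan : ∀ t : EuclideanSpace ℝ (Fin n), ∀ R' : Ω,
          (‖t‖ ^ 2 = 2 * σ R' P₀) →
          (∀ i, ‖w i - t‖ ^ 2 = 2 * σ (P i) R') →
          t ∈ Submodule.span ℝ (Set.range w) := by
        intro t R' ht0 hti
        by_contra hus
        apply hmax
        refine ⟨Fin.snoc P R', Fin.snoc w t, ?_, ?_, ?_⟩
        · rw [linearIndependent_fin_snoc]; exact ⟨hwli, hus⟩
        · intro i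
          refine Fin.lastCases ?_ (fun i => ?_) i
          · simpa using ht0
          · have := hnorm (Sum.inl i) (Sum.inr 0)
            simpa [hp, hw, hy] using this
        · intro i j
          refine Fin.lastCases ?_ (fun i => ?_) i <;>
            [refine Fin.lastCases ?_ (fun j => ?_) j; refine Fin.lastCases ?_ (fun j => ?_) j]
          · simp [hzero]
          · have := hti j
            have hsw : ‖t - w j‖ = ‖w j - t‖ := by rw [norm_sub_rev]
            simp only [Fin.snoc_last, Fin.snoc_castSucc]
            rw [hsw, this, hsymm]
          · have := hti i
            simpa using this
          · have := hnorm (Sum.inl i) (Sum.inl j)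
            simpa [hp, hw, hy] using this
      have husp : u ∈ Submodule.span ℝ (Set.range w) := by
        refine hinspan u R ?_ ?_
        · have := hysq (Sum.inr 1); simpa [hp, hu] using this
        · intro i
          have := hnorm (Sum.inl i) (Sum.inr 1)
          simpa [hp, hw, hu] using this
      have hzsp : z ∈ Submodule.span ℝ (Set.range w) := by
        refine hinspan z S ?_ ?_
        · have := hysq (Sum.inr 2); simpa [hp, hz] using this
        · intro i
          have := hnorm (Sum.inl i) (Sum.inr 2)
          simpa [hp, hw, hz] using this
      obtain ⟨c, hc⟩ := (mem_span_range_iff_exists_fun ℝ).mp husp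
      obtain ⟨d, hd⟩ := (mem_span_range_iff_exists_fun ℝ).mp hzsp
      have hmemv : ∀ e : Fin k → ℝ, (∑ i, e i • v i) ∈ Submodule.span ℝ (Set.range v) :=
        fun e => sum_mem fun i _ => smul_mem _ _ (subset_span (Set.mem_range_self i))
      have hinner : ∀ (e : Fin k → ℝ) (j : Fin k),
          ⟬∑ i, e i • v i, v j⟭ = ⟬∑ i, e i • w i, w j⟭ := by
        intro e j
        rw [sum_inner, sum_inner]
        refine Finset.sum_congr rfl fun i _ => ?_
        rw [real_inner_smul_left, real_inner_smul_left, hGw]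
      refine ⟨∑ i, c i • v i, ∑ i, d i • v i, hmemv c, ?_, hmemv d, ?_, ?_⟩
      · intro j
        rw [hinner c j, hc]
        have := hyin (Sum.inr 1) (Sum.inl j)
        simp only [hp, Sum.elim_inl, Sum.elim_inr, Matrix.cons_val_one, Matrix.head_cons, Matrix.cons_val_zero] at this
        rw [hb]
        simp only [hu, hw] at this ⊢
        rw [this, hsymm R (P j)]
        ring
      · intro j
        rw [hinner d j, hd]
        have := hyin (Sum.inr 2) (Sum.inl j)
        have h2 : (![P₀, R, S] : Fin 3 → Ω) 2 = S := rfl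
        simp only [hp, Sum.elim_inl, Sum.elim_inr, h2] at this
        rw [hb]
        simp only [hz, hw] at this ⊢
        rw [this, hsymm S (P j)]
        ring
      · have hsum : (∑ i, c i • v i) - ∑ i, d i • v i = ∑ i, (c i - d i) • v i := by
          rw [← Finset.sum_sub_distrib]
          exact Finset.sum_congr rfl fun i _ => (sub_smul _ _ _).symm
        have hsumw : (∑ i, c i • w i) - ∑ i, d i • w i = ∑ i, (c i - d i) • w i := by
          rw [← Finset.sum_sub_distrib]
          exact Finset.sum_congr rfl fun i _ => (sub_smul _ _ _).symm
        rw [hsum, menger_norm_sq_sum_eq hGw (fun i => c i - d i), ← hsumw, hc, hd]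
        have := hnorm (Sum.inr 1) (Sum.inr 2)
        simpa [hp, hu, hz] using this
    -- define the global map
    have exist : ∀ R : Ω, ∃ a : EuclideanSpace ℝ (Fin n),
        a ∈ Submodule.span ℝ (Set.range v) ∧ ∀ j, ⟬a, v j⟭ = b R j := by
      intro R
      obtain ⟨a, _, ha1, ha2, _⟩ := key R R
      exact ⟨a, ha1, ha2⟩
    choose F hF1 hF2 using exist
    refine ⟨F, fun R S => ?_⟩
    obtain ⟨a, c, ha1, ha2, hc1, hc2, h⟩ := key R S
    have hFa : F R = a := menger_span_unique v (hF1 R) ha1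
      (fun j => by rw [hF2 R j, ha2 j])
    have hFc : F S = c := menger_span_unique v (hF1 S) hc1
      (fun j => by rw [hF2 S j, hc2 j])
    rw [hFa, hFc, h]
    ring
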